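/- arXiv:2110.14096 — 7 statements merged into one kernel-verified Lean document; each statement's English description precedes it below -/
import Mathlib

section
/- The bisimulation operator F, mapping a bounded function D : S × S → ℝ to F(D)(s,t) = c_R·|r(s) − r(t)| + c_T·D(f(s), f(t)), has a unique bounded fixed point, and this fixed point is given explicitly by the series d(s,t) = c_R · ∑_{n=0}^∞ c_T^n · |r(f^n(s)) − r(f^n(t))|; that is, d is bounded, satisfies d(s,t) = c_R·|r(s) − r(t)| + c_T·d(f(s), f(t)) for all s,t ∈ S, and any bounded function D : S × S → ℝ satisfying D(s,t) = c_R·|r(s) − r(t)| + c_T·D(f(s), f(t)) for all s,t ∈ S equals d. -/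
/-- The deterministic on-policy bisimulation metric
`d(s,t) = c_R · ∑_{n} c_T^n · |r(f^n s) − r(f^n t)|`. -/
noncomputable def bisimD {S : Type*} (f : S → S) (r : S → ℝ) (cR cT : ℝ)
    (s t : S) : ℝ :=
  cR * ∑' n : ℕ, cT ^ n * |r (f^[n] s) - r (f^[n] t)|

/-- The bisimulation operator has a unique bounded fixed point, given
explicitly by the series `d`: `d` is bounded, satisfies the fixed-point equation, and
any bounded function satisfying the fixed-point equation equals `d`. -/
theorem bisim_fixed_point_unique
    {S : Type*} [Nonempty S] (f : S → S) (r : S → ℝ)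
    (hr : ∃ M, ∀ s, |r s| ≤ M)
    (cR cT : ℝ) (hcR : 0 ≤ cR) (hcT0 : 0 ≤ cT) (hcT1 : cT < 1) :
    (∃ M, ∀ s t, |bisimD f r cR cT s t| ≤ M) ∧
    (∀ s t, bisimD f r cR cT s t =
      cR * |r s - r t| + cT * bisimD f r cR cT (f s) (f t)) ∧
    (∀ D : S → S → ℝ, (∃ M, ∀ s t, |D s t| ≤ M) →
      (∀ s t, D s t = cR * |r s - r t| + cT * D (f s) (f t)) →
      ∀ s t, D s t = bisimD f r cR cT s t) := by
  obtain ⟨M, hM⟩ := hr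
  have hM0 : 0 ≤ M := le_trans (abs_nonneg _) (hM Classical.ofNonempty)
  set g : S → S → ℕ → ℝ := fun s t n => cT ^ n * |r (f^[n] s) - r (f^[n] t)| with hg
  have hgle : ∀ s t n, g s t n ≤ (2 * M) * cT ^ n := by
    intro s t n
    have h1 : |r (f^[n] s) - r (f^[n] t)| ≤ 2 * M := by
      calc |r (f^[n] s) - r (f^[n] t)| ≤ |r (f^[n] s)| + |r (f^[n] t)| := abs_sub _ _
        _ ≤ M + M := add_le_add (hM _) (hM _)
        _ = 2 * M := by ring
    calc g s t n = cT ^ n * |r (f^[n] s) - r (f^[n] t)| := rfl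
      _ ≤ cT ^ n * (2 * M) := by
          exact mul_le_mul_of_nonneg_left h1 (pow_nonneg hcT0 n)
      _ = (2 * M) * cT ^ n := by ring
  have hgnn : ∀ s t n, 0 ≤ g s t n := fun s t n =>
    mul_nonneg (pow_nonneg hcT0 n) (abs_nonneg _)
  have hgeom : Summable (fun n : ℕ => (2 * M) * cT ^ n) :=
    (summable_geometric_of_lt_one hcT0 hcT1).mul_left _
  have hsum : ∀ s t, Summable (g s t) := fun s t =>
    Summable.of_nonneg_of_le (hgnn s t) (hgle s t) hgeom
  have htsum_le : ∀ s t, ∑' n, g s t n ≤ (2 * M) / (1 - cT) := by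
    intro s t
    have := Summable.tsum_le_tsum (hgle s t) (hsum s t) hgeom
    calc ∑' n, g s t n ≤ ∑' n, (2 * M) * cT ^ n := this
      _ = (2 * M) * ∑' n, cT ^ n := tsum_mul_left
      _ = (2 * M) * (1 - cT)⁻¹ := by rw [tsum_geometric_of_lt_one hcT0 hcT1]
      _ = (2 * M) / (1 - cT) := by rw [div_eq_mul_inv]
  refine ⟨⟨cR * ((2 * M) / (1 - cT)), ?_⟩, ?_, ?_⟩
  · intro s t
    have h0 : 0 ≤ ∑' n, g s t n := tsum_nonneg (hgnn s t)
    rw [bisimD, abs_of_nonneg (mul_nonneg hcR h0)]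
    exact mul_le_mul_of_nonneg_left (htsum_le s t) hcR
  · intro s t
    have hshift : ∑' n, g s t n = g s t 0 + ∑' n, g s t (n + 1) :=
      Summable.tsum_eq_zero_add (hsum s t)
    have heq : ∀ n, g s t (n + 1) = cT * g (f s) (f t) n := by
      intro n
      simp only [hg, Function.iterate_succ_apply, pow_succ]
      ring
    rw [bisimD, hshift]
    simp only [heq]
    rw [tsum_mul_left]
    show cR * (1 * |r s - r t| + cT * ∑' n, g (f s) (f t) n) = _
    rw [bisimD]; ring
  · intro D ⟨MD, hMD⟩ hfix s t
    -- fixed-point eq for bisimD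
    have hdfix : ∀ s t, bisimD f r cR cT s t =
        cR * |r s - r t| + cT * bisimD f r cR cT (f s) (f t) := by
      intro s t
      have hshift : ∑' n, g s t n = g s t 0 + ∑' n, g s t (n + 1) :=
        Summable.tsum_eq_zero_add (hsum s t)
      have heq : ∀ n, g s t (n + 1) = cT * g (f s) (f t) n := by
        intro n
        simp only [hg, Function.iterate_succ_apply, pow_succ]
        ring
      rw [bisimD, hshift]
      simp only [heq]
      rw [tsum_mul_left]
      show cR * (1 * |r s - r t| + cT * ∑' n, g (f s) (f t) n) = _
      rw [bisimD]; ring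
    set E : S → S → ℝ := fun s t => D s t - bisimD f r cR cT s t with hE
    have hErec : ∀ s t, E s t = cT * E (f s) (f t) := by
      intro s t
      simp only [hE]
      rw [hfix s t, hdfix s t]; ring
    have hEiter : ∀ n s t, E s t = cT ^ n * E (f^[n] s) (f^[n] t) := by
      intro n
      induction n with
      | zero => simp
      | succ k ih =>
        intro s t
        rw [hErec s t, ih (f s) (f t), Function.iterate_succ_apply,
          Function.iterate_succ_apply, pow_succ]
        ring
    have hEbd : ∀ s t, |E s t| ≤ MD + cR * ((2 * M) / (1 - cT)) := by
      intro s t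
      have h0 : 0 ≤ ∑' n, g s t n := tsum_nonneg (hgnn s t)
      have : |bisimD f r cR cT s t| ≤ cR * ((2 * M) / (1 - cT)) := by
        rw [bisimD, abs_of_nonneg (mul_nonneg hcR h0)]
        exact mul_le_mul_of_nonneg_left (htsum_le s t) hcR
      calc |E s t| ≤ |D s t| + |bisimD f r cR cT s t| := abs_sub _ _
        _ ≤ _ := add_le_add (hMD s t) this
    set C := MD + cR * ((2 * M) / (1 - cT)) with hC
    have hbound : ∀ n, |E s t| ≤ cT ^ n * C := by
      intro n
      rw [hEiter n s t, abs_mul, abs_of_nonneg (pow_nonneg hcT0 n)]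
      exact mul_le_mul_of_nonneg_left (hEbd _ _) (pow_nonneg hcT0 n)
    have htend : Filter.Tendsto (fun n : ℕ => cT ^ n * C) Filter.atTop (nhds 0) := by
      have := tendsto_pow_atTop_nhds_zero_of_lt_one hcT0 hcT1
      simpa using this.mul_const C
    have : |E s t| ≤ 0 := ge_of_tendsto' htend fun n => hbound n
    have hE0 : E s t = 0 := abs_eq_zero.mp (le_antisymm this (abs_nonneg _))
    have := hE0
    simp only [hE] at this
    linarith
end

section
/- Value difference bound (c_T ≥ γ case): assume γ ≤ c_T. Then the bisimulation distance between a pair of states upper-bounds the scaled difference in their values: c_R·|V(s) − V(t)| ≤ d(s,t) for all s, t ∈ S. -/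
noncomputable def valueV {S : Type*} (f : S → S) (r : S → ℝ) (γ : ℝ) (s : S) : ℝ :=
  ∑' n : ℕ, γ ^ n * r (f^[n] s)

/-- Value difference bound (`c_T ≥ γ` case): if `γ ≤ c_T`, the
bisimulation distance upper-bounds the scaled value difference:
`c_R·|V s − V t| ≤ d(s,t)`. -/
theorem value_diff_le_bisim
    {S : Type*} [Nonempty S] (f : S → S) (r : S → ℝ)
    (hr : ∃ M, ∀ s, |r s| ≤ M)
    (cR cT γ : ℝ) (hcR : 0 ≤ cR) (hcT0 : 0 ≤ cT) (hcT1 : cT < 1)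
    (hγ0 : 0 ≤ γ) (hγ1 : γ < 1) (hγcT : γ ≤ cT) :
    ∀ s t : S, cR * |valueV f r γ s - valueV f r γ t| ≤ bisimD f r cR cT s t := by
  obtain ⟨M, hM⟩ := hr
  intro s t
  have hsum : ∀ u : S, Summable (fun n : ℕ => γ ^ n * r (f^[n] u)) := by
    intro u
    apply Summable.of_norm_bounded
      ((summable_geometric_of_lt_one hγ0 hγ1).mul_right M)
    intro n
    rw [norm_mul, norm_pow, Real.norm_of_nonneg hγ0, Real.norm_eq_abs]
    exact mul_le_mul_of_nonneg_left (hM _) (pow_nonneg hγ0 n)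
  have hbnd : ∀ n : ℕ, |r (f^[n] s) - r (f^[n] t)| ≤ 2 * M := fun n =>
    (abs_sub _ _).trans (by linarith [hM (f^[n] s), hM (f^[n] t)])
  have hsumd : Summable (fun n : ℕ => cT ^ n * |r (f^[n] s) - r (f^[n] t)|) := by
    apply Summable.of_nonneg_of_le
      (fun n => mul_nonneg (pow_nonneg hcT0 n) (abs_nonneg _))
      (fun n => mul_le_mul_of_nonneg_left (hbnd n) (pow_nonneg hcT0 n))
      ((summable_geometric_of_lt_one hcT0 hcT1).mul_right (2 * M))
  have hsumγ : Summable (fun n : ℕ => γ ^ n * |r (f^[n] s) - r (f^[n] t)|) := by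
    apply Summable.of_nonneg_of_le
      (fun n => mul_nonneg (pow_nonneg hγ0 n) (abs_nonneg _))
      (fun n => mul_le_mul_of_nonneg_right (pow_le_pow_left₀ hγ0 hγcT n) (abs_nonneg _))
      hsumd
  have hdiff : valueV f r γ s - valueV f r γ t
      = ∑' n : ℕ, γ ^ n * (r (f^[n] s) - r (f^[n] t)) := by
    rw [valueV, valueV, ← Summable.tsum_sub (hsum s) (hsum t)]
    congr 1; funext n; ring
  rw [hdiff, bisimD]
  apply mul_le_mul_of_nonneg_left _ hcR
  have habs : Summable (fun n : ℕ => ‖γ ^ n * (r (f^[n] s) - r (f^[n] t))‖) := by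
    simpa [Real.norm_eq_abs, abs_mul, abs_pow, abs_of_nonneg hγ0] using hsumγ
  calc |∑' n : ℕ, γ ^ n * (r (f^[n] s) - r (f^[n] t))|
      ≤ ∑' n : ℕ, ‖γ ^ n * (r (f^[n] s) - r (f^[n] t))‖ := by
        rw [← Real.norm_eq_abs]; exact norm_tsum_le_tsum_norm habs
    _ = ∑' n : ℕ, γ ^ n * |r (f^[n] s) - r (f^[n] t)| :=
        tsum_congr fun n => by rw [Real.norm_eq_abs, abs_mul, abs_pow, abs_of_nonneg hγ0]
    _ ≤ ∑' n : ℕ, cT ^ n * |r (f^[n] s) - r (f^[n] t)| :=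
        Summable.tsum_le_tsum (fun n =>
          mul_le_mul_of_nonneg_right (pow_le_pow_left₀ hγ0 hγcT n) (abs_nonneg _)) hsumγ hsumd
end

section
/- Generalized value difference bound: assume 0 ≤ r(s) ≤ 1 for all s ∈ S, and let γ̄ := min(c_T, γ). Then for all s, t ∈ S, c_R·|V(s) − V(t)| ≤ d(s,t) + 2·c_R·(γ − γ̄)/((1 − γ)·(1 − c_T)). -/
/-- Generalized value difference bound: if `0 ≤ r s ≤ 1` and
`γ̄ = min(c_T, γ)`, then
`c_R·|V s − V t| ≤ d(s,t) + 2·c_R·(γ − γ̄)/((1 − γ)·(1 − c_T))`. -/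
theorem generalized_value_diff_bound
    {S : Type*} [Nonempty S] (f : S → S) (r : S → ℝ)
    (hr : ∀ s, 0 ≤ r s ∧ r s ≤ 1)
    (cR cT γ : ℝ) (hcR : 0 ≤ cR) (hcT0 : 0 ≤ cT) (hcT1 : cT < 1)
    (hγ0 : 0 ≤ γ) (hγ1 : γ < 1) :
    ∀ s t : S, cR * |valueV f r γ s - valueV f r γ t| ≤
      bisimD f r cR cT s t +
        2 * cR * (γ - min cT γ) / ((1 - γ) * (1 - cT)) := by
  intro s t
  set g := min cT γ with hg
  have hg0 : 0 ≤ g := le_min hcT0 hγ0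
  have hg1 : g < 1 := lt_of_le_of_lt (min_le_right _ _) hγ1
  have hgγ : g ≤ γ := min_le_right _ _
  have hgcT : g ≤ cT := min_le_left _ _
  set A : ℕ → ℝ := fun n => |r (f^[n] s) - r (f^[n] t)| with hA
  have hA0 : ∀ n, 0 ≤ A n := fun n => abs_nonneg _
  have hA1 : ∀ n, A n ≤ 1 := by
    intro n
    have h1 := hr (f^[n] s)
    have h2 := hr (f^[n] t)
    rw [hA]; rw [abs_sub_le_iff]; constructor <;> linarith [h1.1, h1.2, h2.1, h2.2]
  -- summability facts
  have hsγ : Summable fun n : ℕ => γ ^ n := summable_geometric_of_lt_one hγ0 hγ1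
  have hscT : Summable fun n : ℕ => cT ^ n := summable_geometric_of_lt_one hcT0 hcT1
  have hsg : Summable fun n : ℕ => g ^ n := summable_geometric_of_lt_one hg0 hg1
  have hpow_nonneg : ∀ (x : ℝ), 0 ≤ x → ∀ n : ℕ, (0:ℝ) ≤ x ^ n := fun x hx n => pow_nonneg hx n
  have hsγA : Summable fun n : ℕ => γ ^ n * A n := by
    refine Summable.of_nonneg_of_le (fun n => mul_nonneg (hpow_nonneg γ hγ0 n) (hA0 n))
      (fun n => ?_) hsγ
    calc γ ^ n * A n ≤ γ ^ n * 1 :=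
          mul_le_mul_of_nonneg_left (hA1 n) (hpow_nonneg γ hγ0 n)
      _ = γ ^ n := mul_one _
  have hscTA : Summable fun n : ℕ => cT ^ n * A n := by
    refine Summable.of_nonneg_of_le (fun n => mul_nonneg (hpow_nonneg cT hcT0 n) (hA0 n))
      (fun n => ?_) hscT
    calc cT ^ n * A n ≤ cT ^ n * 1 :=
          mul_le_mul_of_nonneg_left (hA1 n) (hpow_nonneg cT hcT0 n)
      _ = cT ^ n := mul_one _
  have hsgA : Summable fun n : ℕ => g ^ n * A n := by
    refine Summable.of_nonneg_of_le (fun n => mul_nonneg (hpow_nonneg g hg0 n) (hA0 n))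
      (fun n => ?_) hsg
    calc g ^ n * A n ≤ g ^ n * 1 :=
          mul_le_mul_of_nonneg_left (hA1 n) (hpow_nonneg g hg0 n)
      _ = g ^ n := mul_one _
  have hsVs : Summable fun n : ℕ => γ ^ n * r (f^[n] s) := by
    refine Summable.of_nonneg_of_le (fun n => mul_nonneg (hpow_nonneg γ hγ0 n) (hr _).1)
      (fun n => ?_) hsγ
    calc γ ^ n * r (f^[n] s) ≤ γ ^ n * 1 :=
          mul_le_mul_of_nonneg_left (hr _).2 (hpow_nonneg γ hγ0 n)
      _ = γ ^ n := mul_one _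
  have hsVt : Summable fun n : ℕ => γ ^ n * r (f^[n] t) := by
    refine Summable.of_nonneg_of_le (fun n => mul_nonneg (hpow_nonneg γ hγ0 n) (hr _).1)
      (fun n => ?_) hsγ
    calc γ ^ n * r (f^[n] t) ≤ γ ^ n * 1 :=
          mul_le_mul_of_nonneg_left (hr _).2 (hpow_nonneg γ hγ0 n)
      _ = γ ^ n := mul_one _
  -- Step 1: |V s - V t| ≤ ∑ γ^n A n
  have step1 : |valueV f r γ s - valueV f r γ t| ≤ ∑' n : ℕ, γ ^ n * A n := by
    have hsub : valueV f r γ s - valueV f r γ t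
        = ∑' n : ℕ, (γ ^ n * r (f^[n] s) - γ ^ n * r (f^[n] t)) := by
      rw [valueV, valueV, Summable.tsum_sub hsVs hsVt]
    rw [hsub]
    have := norm_tsum_le_tsum_norm (f := fun n : ℕ => γ ^ n * r (f^[n] s) - γ ^ n * r (f^[n] t))
      (by
        refine hsγA.congr fun n => ?_
        simp only [Real.norm_eq_abs, ← mul_sub, abs_mul, abs_of_nonneg (hpow_nonneg γ hγ0 n)]; rfl)
    rw [Real.norm_eq_abs] at this
    refine this.trans (le_of_eq (tsum_congr fun n => ?_))
    simp only [Real.norm_eq_abs, ← mul_sub, abs_mul, abs_of_nonneg (hpow_nonneg γ hγ0 n)]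
    rfl
  -- Step 2: ∑ γ^n A n ≤ ∑ g^n A n + ∑ (γ^n - g^n)
  have hpow_le : ∀ n : ℕ, g ^ n ≤ γ ^ n := fun n => pow_le_pow_left₀ hg0 hgγ n
  have hsdiff : Summable fun n : ℕ => γ ^ n - g ^ n := hsγ.sub hsg
  have step2 : ∑' n : ℕ, γ ^ n * A n ≤ (∑' n : ℕ, g ^ n * A n) + ∑' n : ℕ, (γ ^ n - g ^ n) := by
    rw [← Summable.tsum_add hsgA hsdiff]
    refine Summable.tsum_le_tsum (fun n => ?_) hsγA (hsgA.add hsdiff)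
    have h1 : γ ^ n * A n = g ^ n * A n + (γ ^ n - g ^ n) * A n := by ring
    rw [h1]
    have h2 : (γ ^ n - g ^ n) * A n ≤ (γ ^ n - g ^ n) * 1 :=
      mul_le_mul_of_nonneg_left (hA1 n) (by linarith [hpow_le n])
    linarith
  -- Step 3: ∑ g^n A n ≤ ∑ cT^n A n
  have step3 : ∑' n : ℕ, g ^ n * A n ≤ ∑' n : ℕ, cT ^ n * A n := by
    refine Summable.tsum_le_tsum (fun n => ?_) hsgA hscTA
    exact mul_le_mul_of_nonneg_right (pow_le_pow_left₀ hg0 hgcT n) (hA0 n)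
  -- Step 4: geometric sums
  have hgeo : ∑' n : ℕ, (γ ^ n - g ^ n) = (1 - γ)⁻¹ - (1 - g)⁻¹ := by
    rw [Summable.tsum_sub hsγ hsg, tsum_geometric_of_lt_one hγ0 hγ1, tsum_geometric_of_lt_one hg0 hg1]
  have h1γ : (0:ℝ) < 1 - γ := by linarith
  have h1g : (0:ℝ) < 1 - g := by linarith
  have h1cT : (0:ℝ) < 1 - cT := by linarith
  have step4 : (1 - γ)⁻¹ - (1 - g)⁻¹ ≤ 2 * (γ - g) / ((1 - γ) * (1 - cT)) := by
    rw [inv_eq_one_div, inv_eq_one_div, div_sub_div _ _ (ne_of_gt h1γ) (ne_of_gt h1g)]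
    rw [div_le_div_iff₀ (by positivity) (by positivity)]
    nlinarith [mul_nonneg (sub_nonneg.2 hgγ) (sub_nonneg.2 hgcT),
      mul_nonneg (mul_nonneg h1γ.le h1cT.le) (sub_nonneg.2 hgγ)]
  -- combine
  have hbisim : bisimD f r cR cT s t = cR * ∑' n : ℕ, cT ^ n * A n := rfl
  have key : cR * |valueV f r γ s - valueV f r γ t|
      ≤ cR * ∑' n : ℕ, cT ^ n * A n + cR * (2 * (γ - g) / ((1 - γ) * (1 - cT))) := by
    have h5 : |valueV f r γ s - valueV f r γ t|
        ≤ (∑' n : ℕ, cT ^ n * A n) + 2 * (γ - g) / ((1 - γ) * (1 - cT)) := by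
      calc |valueV f r γ s - valueV f r γ t| ≤ ∑' n : ℕ, γ ^ n * A n := step1
        _ ≤ (∑' n : ℕ, g ^ n * A n) + ∑' n : ℕ, (γ ^ n - g ^ n) := step2
        _ ≤ (∑' n : ℕ, cT ^ n * A n) + ((1 - γ)⁻¹ - (1 - g)⁻¹) := by
            rw [← hgeo]; exact add_le_add_left step3 _
        _ ≤ (∑' n : ℕ, cT ^ n * A n) + 2 * (γ - g) / ((1 - γ) * (1 - cT)) :=
            add_le_add_right step4 _
    calc cR * |valueV f r γ s - valueV f r γ t|
        ≤ cR * ((∑' n : ℕ, cT ^ n * A n) + 2 * (γ - g) / ((1 - γ) * (1 - cT))) :=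
          mul_le_mul_of_nonneg_left h5 hcR
      _ = cR * ∑' n : ℕ, cT ^ n * A n + cR * (2 * (γ - g) / ((1 - γ) * (1 - cT))) := by ring
  rw [hbisim]
  refine key.trans (le_of_eq ?_)
  congr 1
  field_simp
end

section
/- Relating embedding collapse and low-dispersion rewards: assume f preserves the probability measure ρ (the pushforward of ρ under f equals ρ). Then the mean bisimulation distance equals c_R/(1 − c_T) times the mean reward difference: ∫_{S×S} d(s,t) dν(s,t) = (c_R/(1 − c_T)) · ∫_{S×S} |r(s) − r(t)| dν(s,t), where ν := ρ × ρ is the product measure. In particular, if the mean reward difference is zero, the mean bisimulation distance is zero. -/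
open MeasureTheory

/-- Relating embedding collapse and low-dispersion rewards: if `f`
preserves the probability measure `ρ`, then the mean bisimulation distance equals
`c_R/(1 − c_T)` times the mean reward difference, where `ν = ρ × ρ`. In particular, a
zero mean reward difference forces a zero mean bisimulation distance. -/
theorem mean_bisim_eq_mean_reward_diff
    {S : Type*} [MeasurableSpace S] [Nonempty S]
    (f : S → S) (hf : Measurable f)
    (r : S → ℝ) (hrm : Measurable r) (hr : ∃ M, ∀ s, |r s| ≤ M)
    (cR cT : ℝ) (hcR : 0 ≤ cR) (hcT0 : 0 ≤ cT) (hcT1 : cT < 1)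
    (ρ : Measure S) [IsProbabilityMeasure ρ]
    (hinv : Measure.map f ρ = ρ) :
    (∫ p : S × S, bisimD f r cR cT p.1 p.2 ∂(ρ.prod ρ)) =
      cR / (1 - cT) * ∫ p : S × S, |r p.1 - r p.2| ∂(ρ.prod ρ) ∧
    ((∫ p : S × S, |r p.1 - r p.2| ∂(ρ.prod ρ)) = 0 →
      (∫ p : S × S, bisimD f r cR cT p.1 p.2 ∂(ρ.prod ρ)) = 0) := by
  obtain ⟨M, hM⟩ := hr
  have hM0 : 0 ≤ M := le_trans (abs_nonneg _) (hM (Classical.arbitrary S))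
  set ν := ρ.prod ρ with hν
  have hfn : ∀ n, Measurable (f^[n]) := fun n => hf.iterate n
  have hmapn : ∀ n, Measure.map (f^[n]) ρ = ρ := by
    intro n
    induction n with
    | zero => simp
    | succ n ih =>
      rw [Function.iterate_succ', ← Measure.map_map hf (hfn n), ih, hinv]
  have hmeas0 : Measurable fun p : S × S => |r p.1 - r p.2| :=
    ((hrm.comp measurable_fst).sub (hrm.comp measurable_snd)).abs
  have hint0 : Integrable (fun p : S × S => |r p.1 - r p.2|) ν := by
    refine (integrable_const (2 * M)).mono' hmeas0.aestronglyMeasurable ?_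
    refine Filter.Eventually.of_forall fun p => ?_
    rw [Real.norm_eq_abs, abs_abs]
    calc |r p.1 - r p.2| ≤ |r p.1| + |r p.2| := abs_sub _ _
      _ ≤ M + M := add_le_add (hM _) (hM _)
      _ = 2 * M := by ring
  set I := ∫ p : S × S, |r p.1 - r p.2| ∂ν with hI
  have hInonneg : 0 ≤ I := integral_nonneg fun p => abs_nonneg _
  have hstep : ∀ n : ℕ,
      (∫ p : S × S, |r (f^[n] p.1) - r (f^[n] p.2)| ∂ν) = I := by
    intro n
    have hprodmap : Measure.map (Prod.map (f^[n]) (f^[n])) ν = ν := by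
      rw [hν, ← Measure.map_prod_map ρ ρ (hfn n) (hfn n), hmapn n]
    conv_rhs => rw [hI, ← hprodmap]
    rw [integral_map ((hfn n).prodMap (hfn n)).aemeasurable
        hmeas0.aestronglyMeasurable]
    rfl
  set F : ℕ → S × S → ℝ := fun n p => cT ^ n * |r (f^[n] p.1) - r (f^[n] p.2)|
    with hF
  have hFnonneg : ∀ n p, 0 ≤ F n p := fun n p =>
    mul_nonneg (pow_nonneg hcT0 n) (abs_nonneg _)
  have hFmeas : ∀ n, Measurable (F n) := fun n =>
    measurable_const.mul (((hrm.comp ((hfn n).comp measurable_fst)).sub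
      (hrm.comp ((hfn n).comp measurable_snd))).abs)
  have hFint : ∀ n, Integrable (F n) ν := by
    intro n
    refine (integrable_const (2 * M)).mono' (hFmeas n).aestronglyMeasurable ?_
    refine Filter.Eventually.of_forall fun p => ?_
    rw [Real.norm_eq_abs, abs_of_nonneg (hFnonneg n p)]
    calc cT ^ n * |r (f^[n] p.1) - r (f^[n] p.2)|
        ≤ 1 * (2 * M) := by
          refine mul_le_mul (pow_le_one₀ hcT0 hcT1.le) ?_ (abs_nonneg _)
            zero_le_one
          calc |r (f^[n] p.1) - r (f^[n] p.2)|
              ≤ |r (f^[n] p.1)| + |r (f^[n] p.2)| := abs_sub _ _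
            _ ≤ M + M := add_le_add (hM _) (hM _)
            _ = 2 * M := by ring
      _ = 2 * M := one_mul _
  have hFintval : ∀ n, (∫ p, F n p ∂ν) = cT ^ n * I := by
    intro n
    simp only [hF]
    rw [integral_const_mul _ _, hstep n]
  have hsummable : Summable fun n => ∫ p, ‖F n p‖ ∂ν := by
    have : (fun n => ∫ p, ‖F n p‖ ∂ν) = fun n => cT ^ n * I := by
      funext n
      rw [← hFintval n]
      congr 1
      funext p
      exact Real.norm_of_nonneg (hFnonneg n p)
    rw [this]
    exact (summable_geometric_of_lt_one hcT0 hcT1).mul_right I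
  have hswap : (∑' n, ∫ p, F n p ∂ν) = ∫ p, ∑' n, F n p ∂ν :=
    integral_tsum_of_summable_integral_norm hFint hsummable
  have hmain : (∫ p : S × S, bisimD f r cR cT p.1 p.2 ∂ν) =
      cR / (1 - cT) * I := by
    have h1 : (∫ p : S × S, bisimD f r cR cT p.1 p.2 ∂ν) =
        cR * ∫ p, ∑' n, F n p ∂ν := by
      simp only [bisimD, hF]
      rw [integral_const_mul _ _]
    rw [h1, ← hswap]
    have h2 : (∑' n, ∫ p, F n p ∂ν) = (1 - cT)⁻¹ * I := by
      simp only [hFintval]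
      rw [tsum_mul_right, tsum_geometric_of_lt_one hcT0 hcT1]
    rw [h2, div_eq_mul_inv]
    ring
  exact ⟨hmain, fun h => by rw [hmain, show I = 0 from h, mul_zero]⟩
end

section
/- Second-moment bound for the bisimulation distance: assume f preserves the probability measure ρ and 2·c_T² < 1. Then ∫_{S×S} d(s,t)² dν(s,t) ≤ (2·c_R²/(1 − 2·c_T²)) · ∫_{S×S} |r(s) − r(t)|² dν(s,t), where ν := ρ × ρ is the product measure. -/
open MeasureTheory

/-- Cauchy–Schwarz for infinite sums of nonnegative reals. -/
private lemma tsum_cauchy_schwarz {a b : ℕ → ℝ} (ha : ∀ n, 0 ≤ a n) (hb : ∀ n, 0 ≤ b n)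
    (ha2 : Summable fun n => a n ^ 2) (hb2 : Summable fun n => b n ^ 2) :
    (∑' n, a n * b n) ^ 2 ≤ (∑' n, a n ^ 2) * ∑' n, b n ^ 2 := by
  set A := ∑' n, a n ^ 2 with hA'
  set B := ∑' n, b n ^ 2 with hB'
  have hA : 0 ≤ A := tsum_nonneg fun n => sq_nonneg _
  have hB : 0 ≤ B := tsum_nonneg fun n => sq_nonneg _
  have hAB : 0 ≤ A * B := mul_nonneg hA hB
  have hsum : Summable fun n => a n * b n := by
    refine Summable.of_nonneg_of_le (fun n => mul_nonneg (ha n) (hb n)) (fun n => ?_)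
      (ha2.add hb2)
    have h := two_mul_le_add_sq (a n) (b n)
    have h2 := mul_nonneg (ha n) (hb n)
    nlinarith [h, h2]
  have key : ∑' n, a n * b n ≤ Real.sqrt (A * B) := by
    refine Summable.tsum_le_of_sum_le hsum fun s => ?_
    have h1 : (∑ i ∈ s, a i * b i) ^ 2 ≤ A * B := by
      calc (∑ i ∈ s, a i * b i) ^ 2 ≤ (∑ i ∈ s, a i ^ 2) * ∑ i ∈ s, b i ^ 2 :=
            Finset.sum_mul_sq_le_sq_mul_sq s a b
        _ ≤ A * B := by
            have h2 := Summable.sum_le_tsum s (fun i _ => sq_nonneg (a i)) ha2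
            have h3 := Summable.sum_le_tsum s (fun i _ => sq_nonneg (b i)) hb2
            exact mul_le_mul h2 h3 (Finset.sum_nonneg fun i _ => sq_nonneg _) hA
    by_cases hpos : 0 ≤ ∑ i ∈ s, a i * b i
    · exact (Real.le_sqrt hpos hAB).mpr h1
    · exact le_trans (le_of_lt (not_le.mp hpos)) (Real.sqrt_nonneg _)
  calc (∑' n, a n * b n) ^ 2
      ≤ Real.sqrt (A * B) ^ 2 :=
        pow_le_pow_left₀ (tsum_nonneg fun n => mul_nonneg (ha n) (hb n)) key 2
    _ = A * B := Real.sq_sqrt hAB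

private lemma iterate_map_invariant {S : Type*} [MeasurableSpace S] {f : S → S}
    (hf : Measurable f) {ρ : Measure S} (hinv : Measure.map f ρ = ρ) (n : ℕ) :
    Measure.map (f^[n]) ρ = ρ := by
  induction n with
  | zero => simp
  | succ n ih =>
    rw [Function.iterate_succ', ← Measure.map_map hf (hf.iterate n), ih, hinv]

/-- Second-moment bound for the bisimulation distance: if `f` preserves
the probability measure `ρ` and `2·c_T² < 1`, then
`∫ d² dν ≤ (2·c_R²/(1 − 2·c_T²)) · ∫ |r s − r t|² dν` with `ν = ρ × ρ`. -/
theorem second_moment_bisim_bound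
    {S : Type*} [MeasurableSpace S] [Nonempty S]
    (f : S → S) (hf : Measurable f)
    (r : S → ℝ) (hrm : Measurable r) (hr : ∃ M, ∀ s, |r s| ≤ M)
    (cR cT : ℝ) (hcR : 0 ≤ cR) (hcT0 : 0 ≤ cT) (hcT1 : cT < 1)
    (hcT2 : 2 * cT ^ 2 < 1)
    (ρ : Measure S) [IsProbabilityMeasure ρ]
    (hinv : Measure.map f ρ = ρ) :
    (∫ p : S × S, (bisimD f r cR cT p.1 p.2) ^ 2 ∂(ρ.prod ρ)) ≤
      2 * cR ^ 2 / (1 - 2 * cT ^ 2) *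
        ∫ p : S × S, |r p.1 - r p.2| ^ 2 ∂(ρ.prod ρ) := by
  obtain ⟨M, hM⟩ := hr
  have hM0 : 0 ≤ M := le_trans (abs_nonneg _) (hM (Classical.arbitrary S))
  set ν : Measure (S × S) := ρ.prod ρ with hν
  -- the functions G n
  set G : ℕ → S × S → ℝ := fun n p => |r (f^[n] p.1) - r (f^[n] p.2)| with hG
  have hGm : ∀ n, Measurable (G n) := fun n =>
    (((hrm.comp ((hf.iterate n).comp measurable_fst)).sub
      (hrm.comp ((hf.iterate n).comp measurable_snd)))).abs
  have hG0 : ∀ n p, 0 ≤ G n p := fun n p => abs_nonneg _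
  have hGb : ∀ n p, G n p ≤ 2 * M := by
    intro n p
    calc G n p ≤ |r (f^[n] p.1)| + |r (f^[n] p.2)| := abs_sub _ _
      _ ≤ 2 * M := by have := hM (f^[n] p.1); have := hM (f^[n] p.2); linarith
  have h2cT : 0 ≤ 2 * cT ^ 2 := by positivity
  have h1m : 0 < 1 - 2 * cT ^ 2 := by linarith
  have hhalf : Summable fun n : ℕ => ((1 : ℝ) / 2) ^ n :=
    summable_geometric_of_lt_one (by norm_num) (by norm_num)
  -- summability of the weighted squares
  have hsumsq : ∀ p : S × S, Summable fun n => ((1 : ℝ) / 2) ^ n * G n p ^ 2 := by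
    intro p
    refine Summable.of_nonneg_of_le (fun n => by positivity) (fun n => ?_)
      (hhalf.mul_right ((2 * M) ^ 2))
    have h1 : G n p ^ 2 ≤ (2 * M) ^ 2 :=
      pow_le_pow_left₀ (hG0 n p) (hGb n p) 2
    have h2 : (0 : ℝ) ≤ (1 / 2 : ℝ) ^ n := by positivity
    exact mul_le_mul_of_nonneg_left h1 h2
  -- the dominating function
  set F : S × S → ℝ := fun p => cR ^ 2 * (1 - 2 * cT ^ 2)⁻¹ *
      ∑' n, ((1 : ℝ) / 2) ^ n * G n p ^ 2 with hF
  -- pointwise bound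
  have hpoint : ∀ p : S × S, (bisimD f r cR cT p.1 p.2) ^ 2 ≤ F p := by
    intro p
    have s2 : (0 : ℝ) < Real.sqrt 2 := Real.sqrt_pos.mpr (by norm_num)
    set a : ℕ → ℝ := fun n => (Real.sqrt 2 * cT) ^ n with ha'
    set b : ℕ → ℝ := fun n => ((Real.sqrt 2)⁻¹) ^ n * G n p with hb'
    have hab : ∀ n, a n * b n = cT ^ n * G n p := by
      intro n
      have h2 : Real.sqrt 2 * cT * (Real.sqrt 2)⁻¹ = cT := by
        rw [mul_comm (Real.sqrt 2) cT, mul_assoc, mul_inv_cancel₀ s2.ne', mul_one]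
      rw [ha', hb', ← mul_assoc, ← mul_pow, h2]
    have hsq2 : Real.sqrt 2 ^ 2 = 2 := Real.sq_sqrt (by norm_num)
    have ha2eq : ∀ n, a n ^ 2 = (2 * cT ^ 2) ^ n := by
      intro n
      rw [ha', ← pow_mul, pow_mul', mul_pow, hsq2]
    have hb2eq : ∀ n, b n ^ 2 = ((1 : ℝ) / 2) ^ n * G n p ^ 2 := by
      intro n
      rw [hb', mul_pow, ← pow_mul, pow_mul', inv_pow, hsq2]
      norm_num
    have ha2 : Summable fun n => a n ^ 2 := by
      simp only [ha2eq]
      exact summable_geometric_of_lt_one h2cT hcT2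
    have hb2 : Summable fun n => b n ^ 2 := by
      simp only [hb2eq]; exact hsumsq p
    have haN : ∀ n, 0 ≤ a n := fun n => pow_nonneg (by positivity) n
    have hbN : ∀ n, 0 ≤ b n := fun n => mul_nonneg (by positivity) (hG0 n p)
    have hCS := tsum_cauchy_schwarz haN hbN ha2 hb2
    have hta : (∑' n, a n ^ 2) = (1 - 2 * cT ^ 2)⁻¹ := by
      simp only [ha2eq]
      exact tsum_geometric_of_lt_one h2cT hcT2
    have htab : (∑' n, a n * b n) = ∑' n, cT ^ n * G n p := by
      exact tsum_congr hab
    have htb : (∑' n, b n ^ 2) = ∑' n, ((1 : ℝ) / 2) ^ n * G n p ^ 2 :=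
      tsum_congr hb2eq
    rw [htab, hta, htb] at hCS
    calc (bisimD f r cR cT p.1 p.2) ^ 2
        = cR ^ 2 * (∑' n, cT ^ n * G n p) ^ 2 := by rw [bisimD, mul_pow]
      _ ≤ cR ^ 2 * ((1 - 2 * cT ^ 2)⁻¹ * ∑' n, ((1 : ℝ) / 2) ^ n * G n p ^ 2) := by
          exact mul_le_mul_of_nonneg_left hCS (by positivity)
      _ = F p := by rw [hF]; ring
  -- measurability of the tsum
  have hTm : Measurable fun p => ∑' n, ((1 : ℝ) / 2) ^ n * G n p ^ 2 := by
    apply measurable_of_tendsto_metrizable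
      (f := fun N p => ∑ n ∈ Finset.range N, ((1 : ℝ) / 2) ^ n * G n p ^ 2)
    · intro N
      exact Finset.measurable_sum _ fun n _ =>
        (measurable_const.mul ((hGm n).pow_const 2))
    · rw [tendsto_pi_nhds]
      intro p
      exact ((hsumsq p).hasSum.tendsto_sum_nat)
  have hFm : Measurable F := measurable_const.mul hTm
  -- bound on the tsum
  have hTb : ∀ p, (∑' n, ((1 : ℝ) / 2) ^ n * G n p ^ 2) ≤ 2 * (2 * M) ^ 2 := by
    intro p
    have : (∑' n : ℕ, ((1 : ℝ) / 2) ^ n * (2 * M) ^ 2) = 2 * (2 * M) ^ 2 := by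
      rw [tsum_mul_right, tsum_geometric_of_lt_one (by norm_num) (by norm_num)]
      norm_num
    rw [← this]
    refine Summable.tsum_le_tsum (fun n => ?_) (hsumsq p) (hhalf.mul_right _)
    exact mul_le_mul_of_nonneg_left
      (pow_le_pow_left₀ (hG0 n p) (hGb n p) 2) (by positivity)
  have hT0 : ∀ p, 0 ≤ (∑' n, ((1 : ℝ) / 2) ^ n * G n p ^ 2) :=
    fun p => tsum_nonneg fun n => by positivity
  -- integrability of F
  have hFint : Integrable F ν := by
    refine (integrable_const (cR ^ 2 * (1 - 2 * cT ^ 2)⁻¹ * (2 * (2 * M) ^ 2))).mono'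
      hFm.aestronglyMeasurable ?_
    refine Filter.Eventually.of_forall fun p => ?_
    have hFnn : 0 ≤ F p :=
      mul_nonneg (mul_nonneg (sq_nonneg _) (inv_nonneg.mpr h1m.le)) (hT0 p)
    rw [Real.norm_eq_abs, abs_of_nonneg hFnn, hF]
    exact mul_le_mul_of_nonneg_left (hTb p)
      (mul_nonneg (sq_nonneg _) (inv_nonneg.mpr h1m.le))
  -- step 1: ∫ d² ≤ ∫ F
  have step1 : (∫ p : S × S, (bisimD f r cR cT p.1 p.2) ^ 2 ∂ν) ≤ ∫ p, F p ∂ν := by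
    refine integral_mono_of_nonneg (Filter.Eventually.of_forall fun p => sq_nonneg _)
      hFint (Filter.Eventually.of_forall hpoint)
  -- invariance: each ∫ G n ^ 2 equals ∫ G 0 ^ 2
  have hmapn : ∀ n : ℕ, Measure.map (Prod.map (f^[n]) (f^[n])) ν = ν := by
    intro n
    rw [hν, ← Measure.map_prod_map ρ ρ (hf.iterate n) (hf.iterate n),
      iterate_map_invariant hf hinv n]
  have hGint : ∀ n : ℕ, (∫ p, G n p ^ 2 ∂ν) = ∫ p, G 0 p ^ 2 ∂ν := by
    intro n
    have hmeas : Measurable (Prod.map (f^[n]) (f^[n])) :=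
      (hf.iterate n).prodMap (hf.iterate n)
    have hmap := integral_map (μ := ν) hmeas.aemeasurable
      (f := fun p : S × S => G 0 p ^ 2) ((hGm 0).pow_const 2).aestronglyMeasurable
    rw [hmapn n] at hmap
    rw [hmap]
    refine integral_congr_ae (Filter.Eventually.of_forall fun p => ?_)
    simp [hG, Prod.map]
  -- integrability of G n ^2 terms
  have hGnint : ∀ n : ℕ, Integrable (fun p => ((1 : ℝ) / 2) ^ n * G n p ^ 2) ν := by
    intro n
    refine (integrable_const (((1 : ℝ) / 2) ^ n * (2 * M) ^ 2)).mono'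
      (measurable_const.mul ((hGm n).pow_const 2)).aestronglyMeasurable ?_
    refine Filter.Eventually.of_forall fun p => ?_
    rw [Real.norm_eq_abs, abs_of_nonneg (by positivity)]
    exact mul_le_mul_of_nonneg_left
      (pow_le_pow_left₀ (hG0 n p) (hGb n p) 2) (by positivity)
  -- step 2: swap integral and tsum
  have step2 : (∫ p, (∑' n, ((1 : ℝ) / 2) ^ n * G n p ^ 2) ∂ν)
      = ∑' n, ∫ p, ((1 : ℝ) / 2) ^ n * G n p ^ 2 ∂ν := by
    refine integral_tsum (fun n =>
      (measurable_const.mul ((hGm n).pow_const 2)).aestronglyMeasurable) ?_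
    have hb : ∀ n : ℕ, (∫⁻ p, ‖((1 : ℝ) / 2) ^ n * G n p ^ 2‖₊ ∂ν)
        ≤ ENNReal.ofReal (((1 : ℝ) / 2) ^ n * (2 * M) ^ 2) := by
      intro n
      have : ∀ p : S × S, (‖((1 : ℝ) / 2) ^ n * G n p ^ 2‖₊ : ENNReal)
          ≤ ENNReal.ofReal (((1 : ℝ) / 2) ^ n * (2 * M) ^ 2) := by
        intro p
        rw [← enorm_eq_nnnorm, Real.enorm_eq_ofReal (by positivity)]
        exact ENNReal.ofReal_le_ofReal (mul_le_mul_of_nonneg_left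
          (pow_le_pow_left₀ (hG0 n p) (hGb n p) 2) (by positivity))
      calc (∫⁻ p, ‖((1 : ℝ) / 2) ^ n * G n p ^ 2‖₊ ∂ν)
          ≤ ∫⁻ _, ENNReal.ofReal (((1 : ℝ) / 2) ^ n * (2 * M) ^ 2) ∂ν :=
            lintegral_mono this
        _ = ENNReal.ofReal (((1 : ℝ) / 2) ^ n * (2 * M) ^ 2) := by
            rw [lintegral_const]
            simp [hν]
    have hbs : Summable fun n : ℕ => ((1 : ℝ) / 2) ^ n * (2 * M) ^ 2 :=
      hhalf.mul_right _
    have hle : (∑' n, ∫⁻ p, ‖((1 : ℝ) / 2) ^ n * G n p ^ 2‖₊ ∂ν)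
        ≤ ENNReal.ofReal (∑' n, ((1 : ℝ) / 2) ^ n * (2 * M) ^ 2) := by
      calc (∑' n, ∫⁻ p, ‖((1 : ℝ) / 2) ^ n * G n p ^ 2‖₊ ∂ν)
          ≤ ∑' n, ENNReal.ofReal (((1 : ℝ) / 2) ^ n * (2 * M) ^ 2) :=
            ENNReal.tsum_le_tsum hb
        _ = ENNReal.ofReal (∑' n, ((1 : ℝ) / 2) ^ n * (2 * M) ^ 2) :=
            (ENNReal.ofReal_tsum_of_nonneg (fun n => by positivity) hbs).symm
    exact ne_top_of_le_ne_top ENNReal.ofReal_ne_top hle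
  -- evaluate each term
  set I : ℝ := ∫ p : S × S, |r p.1 - r p.2| ^ 2 ∂ν with hI
  have hIG : (∫ p, G 0 p ^ 2 ∂ν) = I := by
    simp [hG, hI]
  have step3 : ∀ n : ℕ, (∫ p, ((1 : ℝ) / 2) ^ n * G n p ^ 2 ∂ν)
      = ((1 : ℝ) / 2) ^ n * I := by
    intro n
    rw [integral_const_mul, hGint n, hIG]
  -- put it all together
  have hFval : (∫ p, F p ∂ν) = cR ^ 2 * (1 - 2 * cT ^ 2)⁻¹ * (2 * I) := by
    rw [hF]
    rw [integral_const_mul, step2]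
    simp_rw [step3]
    rw [tsum_mul_right, tsum_geometric_of_lt_one (by norm_num) (by norm_num)]
    norm_num
  have hfinal : cR ^ 2 * (1 - 2 * cT ^ 2)⁻¹ * (2 * I)
      = 2 * cR ^ 2 / (1 - 2 * cT ^ 2) * I := by
    field_simp
  calc (∫ p : S × S, (bisimD f r cR cT p.1 p.2) ^ 2 ∂ν)
      ≤ ∫ p, F p ∂ν := step1
    _ = 2 * cR ^ 2 / (1 - 2 * cT ^ 2) * I := by rw [hFval, hfinal]
end

section
/- On-policy variance bound: assume f preserves the probability measure ρ and c_T ∈ [0, √(1/2)), i.e., 2·c_T² < 1. Define ν := ρ × ρ, the means μ_bd := ∫ d dν and μ_rd := ∫ |r(s) − r(t)| dν, and the variances σ_bd² := ∫ d² dν − μ_bd² and σ_rd² := ∫ |r(s) − r(t)|² dν − μ_rd². Then σ_bd² ≤ (2·c_R²/(1 − 2·c_T²))·σ_rd² + (c_R²·(1 − 2·c_T)²/((1 − 2·c_T²)·(1 − c_T)²))·μ_rd². -/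
open MeasureTheory

lemma cs_series (g : ℕ → ℝ) (C : ℝ) (hg0 : ∀ n, 0 ≤ g n) (hgC : ∀ n, g n ≤ C)
    (cT : ℝ) (hcT0 : 0 ≤ cT) (hcT2 : 2 * cT ^ 2 < 1) :
    (∑' n, cT ^ n * g n) ^ 2 ≤ (1 - 2 * cT ^ 2)⁻¹ * ∑' n, (1/2 : ℝ) ^ n * g n ^ 2 := by
  have hC0 : 0 ≤ C := le_trans (hg0 0) (hgC 0)
  have hcT1 : cT < 1 := by nlinarith
  have hsum : Summable (fun n => cT ^ n * g n) := by
    apply Summable.of_nonneg_of_le (fun n => mul_nonneg (pow_nonneg hcT0 n) (hg0 n))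
      (fun n => ?_) ((summable_geometric_of_lt_one hcT0 hcT1).mul_right C)
    exact mul_le_mul_of_nonneg_left (hgC n) (pow_nonneg hcT0 n)
  have hsum2 : Summable (fun n => (1/2 : ℝ) ^ n * g n ^ 2) := by
    apply Summable.of_nonneg_of_le (fun n => mul_nonneg (by positivity) (sq_nonneg _))
      (fun n => ?_) ((summable_geometric_of_lt_one (by norm_num) (by norm_num : (1/2:ℝ) < 1)).mul_right (C^2))
    have := pow_le_pow_left₀ (hg0 n) (hgC n) 2
    exact mul_le_mul_of_nonneg_left this (by positivity)
  have hsumu : Summable (fun n => (2 * cT ^ 2 : ℝ) ^ n) :=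
    summable_geometric_of_lt_one (by positivity) hcT2
  have hkey : ∀ N : ℕ, (∑ n ∈ Finset.range N, cT ^ n * g n) ^ 2 ≤
      (1 - 2 * cT ^ 2)⁻¹ * ∑' n, (1/2 : ℝ) ^ n * g n ^ 2 := by
    intro N
    have hcs := Finset.sum_mul_sq_le_sq_mul_sq (Finset.range N)
      (fun n => (Real.sqrt 2 * cT) ^ n) (fun n => ((Real.sqrt 2)⁻¹) ^ n * g n)
    have h2 : (Real.sqrt 2 : ℝ) ^ 2 = 2 := Real.sq_sqrt (by norm_num)
    have hprod : ∀ n : ℕ, (Real.sqrt 2 * cT) ^ n * (((Real.sqrt 2)⁻¹) ^ n * g n) = cT ^ n * g n := by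
      intro n
      have hs2 : (Real.sqrt 2 : ℝ) ≠ 0 := by positivity
      field_simp [mul_pow]
      have hp : (Real.sqrt 2) ^ n * ((Real.sqrt 2)⁻¹) ^ n = 1 := by
        rw [← mul_pow, mul_inv_cancel₀ hs2, one_pow]
      linear_combination (cT ^ n * g n) * hp
    have hu : ∀ n : ℕ, ((Real.sqrt 2 * cT) ^ n) ^ 2 = (2 * cT ^ 2) ^ n := by
      intro n; rw [← pow_mul, mul_comm n 2, pow_mul, mul_pow, h2, mul_pow]
    have hv : ∀ n : ℕ, (((Real.sqrt 2)⁻¹) ^ n * g n) ^ 2 = (1/2 : ℝ) ^ n * g n ^ 2 := by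
      intro n; rw [mul_pow, ← pow_mul, mul_comm n 2, pow_mul]
      norm_num [h2]
    simp only [hprod, hu, hv] at hcs
    refine hcs.trans ?_
    have h1 : ∑ n ∈ Finset.range N, (2 * cT ^ 2 : ℝ) ^ n ≤ (1 - 2 * cT ^ 2)⁻¹ := by
      rw [← tsum_geometric_of_lt_one (by positivity) hcT2]
      exact Summable.sum_le_tsum _ (fun n _ => by positivity) hsumu
    have h2' : ∑ n ∈ Finset.range N, (1/2 : ℝ) ^ n * g n ^ 2 ≤ ∑' n, (1/2 : ℝ) ^ n * g n ^ 2 :=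
      Summable.sum_le_tsum _ (fun n _ => mul_nonneg (by positivity) (sq_nonneg _)) hsum2
    have hnn : (0:ℝ) ≤ ∑ n ∈ Finset.range N, (1/2 : ℝ) ^ n * g n ^ 2 :=
      Finset.sum_nonneg fun n _ => mul_nonneg (by positivity) (sq_nonneg _)
    exact mul_le_mul h1 h2' hnn (inv_nonneg.2 (by linarith))
  have htend : Filter.Tendsto (fun N => (∑ n ∈ Finset.range N, cT ^ n * g n) ^ 2)
      Filter.atTop (nhds ((∑' n, cT ^ n * g n) ^ 2)) :=
    (hsum.hasSum.tendsto_sum_nat).pow 2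
  exact le_of_tendsto' htend hkey

lemma integral_tsum_of_bound {X : Type*} [MeasurableSpace X] [Nonempty X] (ν : Measure X)
    [IsProbabilityMeasure ν] (h : ℕ → X → ℝ) (hm : ∀ n, Measurable (h n))
    (c : ℕ → ℝ) (hb : ∀ n x, |h n x| ≤ c n) (hcs : Summable c) :
    ∫ x, ∑' n, h n x ∂ν = ∑' n, ∫ x, h n x ∂ν := by
  have hc0 : ∀ n, 0 ≤ c n := fun n => le_trans (abs_nonneg _) (hb n (Classical.arbitrary X))
  refine integral_tsum (fun n => (hm n).aestronglyMeasurable) ?_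
  have hle : ∀ n, ∫⁻ x, ‖h n x‖₊ ∂ν ≤ ENNReal.ofReal (c n) := by
    intro n
    calc ∫⁻ x, (‖h n x‖₊ : ENNReal) ∂ν ≤ ∫⁻ _, ENNReal.ofReal (c n) ∂ν := by
          refine lintegral_mono fun x => ?_
          rw [← enorm_eq_nnnorm, ← ofReal_norm_eq_enorm]
          exact ENNReal.ofReal_le_ofReal ((Real.norm_eq_abs _).le.trans (hb n x))
      _ = ENNReal.ofReal (c n) := by simp
  refine ne_top_of_le_ne_top ?_ (ENNReal.tsum_le_tsum hle)
  rw [← ENNReal.ofReal_tsum_of_nonneg hc0 hcs]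
  exact ENNReal.ofReal_ne_top

lemma measurable_tsum_of_summable {X : Type*} [MeasurableSpace X] (h : ℕ → X → ℝ)
    (hm : ∀ n, Measurable (h n)) (hs : ∀ x, Summable fun n => h n x) :
    Measurable fun x => ∑' n, h n x :=
  measurable_of_tendsto_metrizable
    (fun N => (Finset.range N).measurable_sum fun n _ => hm n)
    (tendsto_pi_nhds.2 fun x => (hs x).hasSum.tendsto_sum_nat)

/-- On-policy variance bound: if `f` preserves the probability measure
`ρ` and `2·c_T² < 1`, then with `ν = ρ × ρ`, `μ_bd = ∫ d dν`, `μ_rd = ∫ |r s − r t| dν`,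
`σ_bd² = ∫ d² dν − μ_bd²` and `σ_rd² = ∫ |r s − r t|² dν − μ_rd²`, one has
`σ_bd² ≤ (2·c_R²/(1 − 2·c_T²))·σ_rd² + (c_R²·(1 − 2·c_T)²/((1 − 2·c_T²)·(1 − c_T)²))·μ_rd²`. -/
theorem onpolicy_variance_bound
    {S : Type*} [MeasurableSpace S] [Nonempty S]
    (f : S → S) (hf : Measurable f)
    (r : S → ℝ) (hrm : Measurable r) (hr : ∃ M, ∀ s, |r s| ≤ M)
    (cR cT : ℝ) (hcR : 0 ≤ cR) (hcT0 : 0 ≤ cT) (hcT1 : cT < 1)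
    (hcT2 : 2 * cT ^ 2 < 1)
    (ρ : Measure S) [IsProbabilityMeasure ρ]
    (hinv : Measure.map f ρ = ρ) :
    (∫ p : S × S, (bisimD f r cR cT p.1 p.2) ^ 2 ∂(ρ.prod ρ)) -
        (∫ p : S × S, bisimD f r cR cT p.1 p.2 ∂(ρ.prod ρ)) ^ 2 ≤
      2 * cR ^ 2 / (1 - 2 * cT ^ 2) *
          ((∫ p : S × S, |r p.1 - r p.2| ^ 2 ∂(ρ.prod ρ)) -
            (∫ p : S × S, |r p.1 - r p.2| ∂(ρ.prod ρ)) ^ 2) +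
        cR ^ 2 * (1 - 2 * cT) ^ 2 / ((1 - 2 * cT ^ 2) * (1 - cT) ^ 2) *
          (∫ p : S × S, |r p.1 - r p.2| ∂(ρ.prod ρ)) ^ 2 := by
  classical
  obtain ⟨M, hM⟩ := hr
  set M₀ : ℝ := max M 0 with hM₀def
  have hM₀ : ∀ s, |r s| ≤ M₀ := fun s => (hM s).trans (le_max_left _ _)
  have hM₀0 : 0 ≤ M₀ := le_max_right _ _
  set ν : Measure (S × S) := ρ.prod ρ with hν
  set g : S × S → ℝ := fun p => |r p.1 - r p.2| with hgdef
  have hgm : Measurable g := ((hrm.comp measurable_fst).sub (hrm.comp measurable_snd)).abs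
  have hg0 : ∀ p, 0 ≤ g p := fun p => abs_nonneg _
  have hgC : ∀ p, g p ≤ 2 * M₀ := by
    intro p
    calc g p ≤ |r p.1| + |r p.2| := abs_sub _ _
      _ ≤ 2 * M₀ := by have := hM₀ p.1; have := hM₀ p.2; linarith
  set F : S × S → S × S := Prod.map f f with hFdef
  have hFm : Measurable F := hf.prodMap hf
  have hFit : ∀ (n : ℕ) (p : S × S), F^[n] p = (f^[n] p.1, f^[n] p.2) := by
    intro n
    induction n with
    | zero => intro p; simp
    | succ n ih =>
      intro p
      rw [Function.iterate_succ_apply', ih, Function.iterate_succ_apply',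
        Function.iterate_succ_apply']
      rfl
  have hmapF : ∀ n : ℕ, Measure.map (F^[n]) ν = ν := by
    intro n
    induction n with
    | zero => simp
    | succ n ih =>
      rw [Function.iterate_succ', ← Measure.map_map hFm (hFm.iterate n), ih, hν, hFdef,
        ← Measure.map_prod_map ρ ρ hf hf, hinv]
  have hginm : ∀ n : ℕ, Measurable fun p => g (F^[n] p) := fun n => hgm.comp (hFm.iterate n)
  set B : ℝ := ∫ p, g p ∂ν with hB
  set A : ℝ := ∫ p, (g p) ^ 2 ∂ν with hA
  have hI1 : ∀ n : ℕ, ∫ p, g (F^[n] p) ∂ν = B := by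
    intro n
    rw [hB]
    conv_rhs => rw [← hmapF n]
    rw [integral_map (hFm.iterate n).aemeasurable hgm.aestronglyMeasurable]
  have hI2 : ∀ n : ℕ, ∫ p, (g (F^[n] p)) ^ 2 ∂ν = A := by
    intro n
    rw [hA]
    conv_rhs => rw [← hmapF n]
    rw [integral_map (hFm.iterate n).aemeasurable (hgm.pow_const 2).aestronglyMeasurable]
  -- the inner series
  set d : S × S → ℝ := fun p => ∑' n : ℕ, cT ^ n * g (F^[n] p) with hd
  have hsump : ∀ p, Summable fun n => cT ^ n * g (F^[n] p) := by
    intro p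
    apply Summable.of_nonneg_of_le
      (fun n => mul_nonneg (pow_nonneg hcT0 n) (hg0 _)) (fun n => ?_)
      ((summable_geometric_of_lt_one hcT0 hcT1).mul_right (2 * M₀))
    exact mul_le_mul_of_nonneg_left (hgC _) (pow_nonneg hcT0 n)
  have hbis : ∀ p : S × S, bisimD f r cR cT p.1 p.2 = cR * d p := by
    intro p
    simp only [bisimD, hd, hgdef, hFit]
  have hdm : Measurable d :=
    measurable_tsum_of_summable _ (fun n => (measurable_const.mul (hginm n))) hsump
  -- mean of d
  have hmean : ∫ p, d p ∂ν = (1 - cT)⁻¹ * B := by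
    rw [hd]
    rw [integral_tsum_of_bound ν (fun n p => cT ^ n * g (F^[n] p)) (fun n => measurable_const.mul (hginm n))
      (fun n => cT ^ n * (2 * M₀)) ?_ ((summable_geometric_of_lt_one hcT0 hcT1).mul_right _)]
    · have : ∀ n : ℕ, ∫ p, cT ^ n * g (F^[n] p) ∂ν = cT ^ n * B := by
        intro n; rw [integral_const_mul _ _, hI1 n]
      simp_rw [this]
      rw [tsum_mul_right, tsum_geometric_of_lt_one hcT0 hcT1]
    · intro n x
      rw [abs_mul, abs_of_nonneg (pow_nonneg hcT0 n), abs_of_nonneg (hg0 _)]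
      exact mul_le_mul_of_nonneg_left (hgC _) (pow_nonneg hcT0 n)
  -- second moment bound
  set T : S × S → ℝ := fun p => ∑' n : ℕ, (1/2 : ℝ) ^ n * (g (F^[n] p)) ^ 2 with hT
  have hsumT : ∀ p, Summable fun n => (1/2 : ℝ) ^ n * (g (F^[n] p)) ^ 2 := by
    intro p
    apply Summable.of_nonneg_of_le
      (fun n => mul_nonneg (by positivity) (sq_nonneg _)) (fun n => ?_)
      ((summable_geometric_of_lt_one (by norm_num) (by norm_num : (1/2:ℝ) < 1)).mul_right ((2 * M₀) ^ 2))
    exact mul_le_mul_of_nonneg_left (pow_le_pow_left₀ (hg0 _) (hgC _) 2) (by positivity)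
  have hTm : Measurable T :=
    measurable_tsum_of_summable _ (fun n => measurable_const.mul ((hginm n).pow_const 2)) hsumT
  have hTle : ∀ p, T p ≤ 2 * (2 * M₀) ^ 2 := by
    intro p
    have : ∑' n : ℕ, (1/2 : ℝ) ^ n * (2 * M₀) ^ 2 = 2 * (2 * M₀) ^ 2 := by
      rw [tsum_mul_right, tsum_geometric_of_lt_one (by norm_num) (by norm_num : (1/2:ℝ) < 1)]
      norm_num
    rw [hT, ← this]
    exact Summable.tsum_le_tsum (fun n => mul_le_mul_of_nonneg_left
        (pow_le_pow_left₀ (hg0 _) (hgC _) 2) (by positivity)) (hsumT p)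
      ((summable_geometric_of_lt_one (by norm_num) (by norm_num : (1/2:ℝ) < 1)).mul_right _)
  have hT0 : ∀ p, 0 ≤ T p :=
    fun p => tsum_nonneg fun n => mul_nonneg (by positivity) (sq_nonneg _)
  have hTint : Integrable T ν := by
    refine (integrable_const (2 * (2 * M₀) ^ 2 : ℝ)).mono' hTm.aestronglyMeasurable ?_
    filter_upwards with p
    rw [Real.norm_eq_abs, abs_of_nonneg (hT0 p)]
    exact hTle p
  have hTval : ∫ p, T p ∂ν = 2 * A := by
    rw [hT]
    rw [integral_tsum_of_bound ν (fun n p => (1/2 : ℝ) ^ n * (g (F^[n] p)) ^ 2) (fun n => measurable_const.mul ((hginm n).pow_const 2))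
      (fun n => (1/2 : ℝ) ^ n * (2 * M₀) ^ 2) ?_
      ((summable_geometric_of_lt_one (by norm_num) (by norm_num : (1/2:ℝ) < 1)).mul_right _)]
    · have : ∀ n : ℕ, ∫ p, (1/2 : ℝ) ^ n * (g (F^[n] p)) ^ 2 ∂ν = (1/2 : ℝ) ^ n * A := by
        intro n; rw [integral_const_mul _ _, hI2 n]
      simp_rw [this]
      rw [tsum_mul_right, tsum_geometric_of_lt_one (by norm_num) (by norm_num : (1/2:ℝ) < 1)]
      norm_num
    · intro n x
      rw [abs_mul, abs_of_nonneg (by positivity : (0:ℝ) ≤ (1/2:ℝ)^n),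
        abs_of_nonneg (sq_nonneg _)]
      exact mul_le_mul_of_nonneg_left (pow_le_pow_left₀ (hg0 _) (hgC _) 2) (by positivity)
  have hsq : ∫ p, (cR * d p) ^ 2 ∂ν ≤ cR ^ 2 * (1 - 2 * cT ^ 2)⁻¹ * (2 * A) := by
    have hpt : ∀ p, (cR * d p) ^ 2 ≤ cR ^ 2 * (1 - 2 * cT ^ 2)⁻¹ * T p := by
      intro p
      have := cs_series (fun n => g (F^[n] p)) (2 * M₀) (fun n => hg0 _) (fun n => hgC _)
        cT hcT0 hcT2
      calc (cR * d p) ^ 2 = cR ^ 2 * (d p) ^ 2 := by ring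
        _ ≤ cR ^ 2 * ((1 - 2 * cT ^ 2)⁻¹ * T p) :=
            mul_le_mul_of_nonneg_left this (sq_nonneg cR)
        _ = cR ^ 2 * (1 - 2 * cT ^ 2)⁻¹ * T p := by ring
    calc ∫ p, (cR * d p) ^ 2 ∂ν ≤ ∫ p, cR ^ 2 * (1 - 2 * cT ^ 2)⁻¹ * T p ∂ν := by
          refine integral_mono_of_nonneg (Filter.Eventually.of_forall fun p => sq_nonneg _)
            (hTint.const_mul _) (Filter.Eventually.of_forall hpt)
      _ = cR ^ 2 * (1 - 2 * cT ^ 2)⁻¹ * (2 * A) := by rw [integral_const_mul _ _, hTval]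
  -- put it together
  have hgoal1 : ∫ p : S × S, (bisimD f r cR cT p.1 p.2) ^ 2 ∂(ρ.prod ρ) =
      ∫ p, (cR * d p) ^ 2 ∂ν := by
    rw [hν]; congr 1; funext p; rw [hbis p]
  have hgoal2 : ∫ p : S × S, bisimD f r cR cT p.1 p.2 ∂(ρ.prod ρ) = cR * ((1 - cT)⁻¹ * B) := by
    have : ∫ p : S × S, bisimD f r cR cT p.1 p.2 ∂(ρ.prod ρ) = ∫ p, cR * d p ∂ν := by
      rw [hν]; congr 1; funext p; rw [hbis p]
    rw [this, integral_const_mul _ _, hmean]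
  rw [hgoal1, hgoal2]
  have h1 : (1 - 2 * cT ^ 2 : ℝ) ≠ 0 := by nlinarith
  have h2 : (1 - cT : ℝ) ≠ 0 := by intro h; nlinarith
  have halg : cR ^ 2 * (1 - 2 * cT ^ 2)⁻¹ * (2 * A) - (cR * ((1 - cT)⁻¹ * B)) ^ 2 =
      2 * cR ^ 2 / (1 - 2 * cT ^ 2) * (A - B ^ 2) +
        cR ^ 2 * (1 - 2 * cT) ^ 2 / ((1 - 2 * cT ^ 2) * (1 - cT) ^ 2) * B ^ 2 := by
    field_simp
    ring
  linarith [hsq]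
end

section
/- Bisimulation distance error with approximate dynamics: let f̂ : S → S be an approximate transition map and r̂ : S → ℝ an approximate bounded reward function, and let d̂ be the bisimulation metric built from f̂ and r̂, i.e., d̂(s,t) := c_R · ∑_{n=0}^∞ c_T^n · |r̂(f̂^n(s)) − r̂(f̂^n(t))|. Suppose ε_r ≥ 0 and ε_P ≥ 0 satisfy |r̂(s) − r(s)| ≤ ε_r for all s ∈ S and d(f(s), f̂(s)) ≤ ε_P for all s ∈ S. Then for all s, t ∈ S, |d(s,t) − d̂(s,t)| ≤ (2·c_R·ε_r)/(1 − c_T) + (2·c_T·ε_P)/(1 − c_T). -/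
lemma my_abs_tsum_le {g : ℕ → ℝ} (hg : Summable fun n => |g n|) :
    |∑' n, g n| ≤ ∑' n, |g n| := by
  have := norm_tsum_le_tsum_norm (f := g) (by simpa [Real.norm_eq_abs] using hg)
  simpa [Real.norm_eq_abs] using this

section aux
variable {S : Type*} {f : S → S} {r : S → ℝ} {cR cT : ℝ}

lemma bisim_summable {M : ℝ} (hr : ∀ s, |r s| ≤ M) (hcT0 : 0 ≤ cT) (hcT1 : cT < 1)
    (s t : S) : Summable (fun n : ℕ => cT ^ n * |r (f^[n] s) - r (f^[n] t)|) := by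
  refine Summable.of_nonneg_of_le (fun n => by positivity) (fun n => ?_)
    ((summable_geometric_of_lt_one hcT0 hcT1).mul_right (M + M))
  have h : |r (f^[n] s) - r (f^[n] t)| ≤ M + M :=
    (abs_sub _ _).trans (add_le_add (hr _) (hr _))
  have hpow : (0:ℝ) ≤ cT ^ n := by positivity
  exact mul_le_mul_of_nonneg_left h hpow

lemma bisim_nonneg (hcR : 0 ≤ cR) (hcT0 : 0 ≤ cT) (s t : S) :
    0 ≤ bisimD f r cR cT s t := by
  unfold bisimD
  exact mul_nonneg hcR (tsum_nonneg fun n => by positivity)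

lemma bisim_le {M : ℝ} (hr : ∀ s, |r s| ≤ M) (hcR : 0 ≤ cR) (hcT0 : 0 ≤ cT) (hcT1 : cT < 1)
    (s t : S) : bisimD f r cR cT s t ≤ cR * ((M + M) / (1 - cT)) := by
  unfold bisimD
  refine mul_le_mul_of_nonneg_left ?_ hcR
  have : (∑' n : ℕ, cT ^ n * (M + M)) = (M + M) / (1 - cT) := by
    rw [tsum_mul_right, tsum_geometric_of_lt_one hcT0 hcT1]
    ring
  rw [← this]
  refine Summable.tsum_le_tsum (fun n => ?_) (bisim_summable hr hcT0 hcT1 s t)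
    ((summable_geometric_of_lt_one hcT0 hcT1).mul_right (M + M))
  exact mul_le_mul_of_nonneg_left ((abs_sub _ _).trans (add_le_add (hr _) (hr _)))
    (by positivity)

lemma bisim_symm (s t : S) : bisimD f r cR cT s t = bisimD f r cR cT t s := by
  unfold bisimD
  congr 1
  exact tsum_congr fun n => by rw [abs_sub_comm]

lemma bisim_rec {M : ℝ} (hr : ∀ s, |r s| ≤ M) (hcT0 : 0 ≤ cT) (hcT1 : cT < 1)
    (s t : S) :
    bisimD f r cR cT s t = cR * |r s - r t| + cT * bisimD f r cR cT (f s) (f t) := by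
  unfold bisimD
  have hsum := bisim_summable (f := f) hr hcT0 hcT1 s t
  rw [Summable.tsum_eq_zero_add hsum]
  simp only [pow_zero, one_mul, Function.iterate_zero_apply, pow_succ,
    Function.iterate_succ_apply]
  have : (∑' n : ℕ, cT ^ n * cT * |r (f^[n] (f s)) - r (f^[n] (f t))|)
      = cT * ∑' n : ℕ, cT ^ n * |r (f^[n] (f s)) - r (f^[n] (f t))| := by
    rw [← tsum_mul_left]
    exact tsum_congr fun n => by ring
  rw [this]
  ring

lemma bisim_triangle {M : ℝ} (hr : ∀ s, |r s| ≤ M) (hcR : 0 ≤ cR) (hcT0 : 0 ≤ cT)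
    (hcT1 : cT < 1) (s u t : S) :
    bisimD f r cR cT s t ≤ bisimD f r cR cT s u + bisimD f r cR cT u t := by
  unfold bisimD
  rw [← mul_add]
  refine mul_le_mul_of_nonneg_left ?_ hcR
  rw [← Summable.tsum_add (bisim_summable hr hcT0 hcT1 s u) (bisim_summable hr hcT0 hcT1 u t)]
  refine Summable.tsum_le_tsum (fun n => ?_) (bisim_summable hr hcT0 hcT1 s t)
    ((bisim_summable hr hcT0 hcT1 s u).add (bisim_summable hr hcT0 hcT1 u t))
  rw [← mul_add]
  refine mul_le_mul_of_nonneg_left ?_ (by positivity)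
  exact (abs_sub_le _ _ _)

/-- quadrilateral inequality -/
lemma bisim_quad {M : ℝ} (hr : ∀ s, |r s| ≤ M) (hcR : 0 ≤ cR) (hcT0 : 0 ≤ cT)
    (hcT1 : cT < 1) (a b a' b' : S) :
    |bisimD f r cR cT a b - bisimD f r cR cT a' b'| ≤
      bisimD f r cR cT a a' + bisimD f r cR cT b b' := by
  rw [abs_sub_le_iff]
  constructor
  · have h1 := bisim_triangle (f := f) hr hcR hcT0 hcT1 a a' b
    have h2 := bisim_triangle (f := f) hr hcR hcT0 hcT1 a' b' b
    have h3 := bisim_symm (f := f) (r := r) (cR := cR) (cT := cT) b' b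
    linarith
  · have h1 := bisim_triangle (f := f) hr hcR hcT0 hcT1 a' a b'
    have h2 := bisim_triangle (f := f) hr hcR hcT0 hcT1 a b b'
    have h3 := bisim_symm (f := f) (r := r) (cR := cR) (cT := cT) a' a
    linarith

/-- reward perturbation -/
lemma bisim_reward_diff {r' : S → ℝ} {M M' ε : ℝ} (hr : ∀ s, |r s| ≤ M)
    (hr' : ∀ s, |r' s| ≤ M') (hcR : 0 ≤ cR) (hcT0 : 0 ≤ cT) (hcT1 : cT < 1)
    (hε : ∀ s, |r' s - r s| ≤ ε) (s t : S) :
    |bisimD f r cR cT s t - bisimD f r' cR cT s t| ≤ 2 * cR * ε / (1 - cT) := by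
  have hε0 : 0 ≤ ε := le_trans (abs_nonneg _) (hε s)
  have hs1 := bisim_summable (f := f) hr hcT0 hcT1 s t
  have hs2 := bisim_summable (f := f) hr' hcT0 hcT1 s t
  unfold bisimD
  rw [← mul_sub, abs_mul, abs_of_nonneg hcR, ← Summable.tsum_sub hs1 hs2]
  have hgeo : Summable (fun n : ℕ => cT ^ n * (2 * ε)) :=
    (summable_geometric_of_lt_one hcT0 hcT1).mul_right _
  have hterm : ∀ n : ℕ,
      abs (cT ^ n * |r (f^[n] s) - r (f^[n] t)| - cT ^ n * |r' (f^[n] s) - r' (f^[n] t)|)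
        ≤ cT ^ n * (2 * ε) := by
    intro n
    rw [← mul_sub, abs_mul, abs_of_nonneg (pow_nonneg hcT0 n)]
    refine mul_le_mul_of_nonneg_left ?_ (pow_nonneg hcT0 n)
    have h1 : abs ((|r (f^[n] s) - r (f^[n] t)|) - |r' (f^[n] s) - r' (f^[n] t)|)
        ≤ |(r (f^[n] s) - r (f^[n] t)) - (r' (f^[n] s) - r' (f^[n] t))| :=
      abs_abs_sub_abs_le_abs_sub _ _
    have h2 : |(r (f^[n] s) - r (f^[n] t)) - (r' (f^[n] s) - r' (f^[n] t))|
        ≤ |r' (f^[n] s) - r (f^[n] s)| + |r' (f^[n] t) - r (f^[n] t)| := by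
      have : (r (f^[n] s) - r (f^[n] t)) - (r' (f^[n] s) - r' (f^[n] t))
          = -((r' (f^[n] s) - r (f^[n] s)) - (r' (f^[n] t) - r (f^[n] t))) := by ring
      rw [this, abs_neg]
      exact abs_sub _ _
    have := (h1.trans h2).trans (add_le_add (hε _) (hε _))
    linarith
  have habs : abs (∑' n : ℕ, (cT ^ n * |r (f^[n] s) - r (f^[n] t)|
      - cT ^ n * |r' (f^[n] s) - r' (f^[n] t)|)) ≤ ∑' n : ℕ, cT ^ n * (2 * ε) := by
    have hsub := hs1.sub hs2
    exact (my_abs_tsum_le hsub.abs).trans (Summable.tsum_le_tsum hterm hsub.abs hgeo)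
  have hsum : (∑' n : ℕ, cT ^ n * (2 * ε)) = 2 * ε / (1 - cT) := by
    rw [tsum_mul_right, tsum_geometric_of_lt_one hcT0 hcT1]; ring
  rw [hsum] at habs
  calc cR * abs (∑' n : ℕ, (cT ^ n * |r (f^[n] s) - r (f^[n] t)|
        - cT ^ n * |r' (f^[n] s) - r' (f^[n] t)|))
      ≤ cR * (2 * ε / (1 - cT)) := mul_le_mul_of_nonneg_left habs hcR
    _ = 2 * cR * ε / (1 - cT) := by ring
end aux

lemma bisim_dyn_diff {S : Type*} [Nonempty S] {f fhat : S → S} {r : S → ℝ} {cR cT : ℝ}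
    {M εP : ℝ} (hr : ∀ s, |r s| ≤ M) (hcR : 0 ≤ cR) (hcT0 : 0 ≤ cT) (hcT1 : cT < 1)
    (hεP : 0 ≤ εP) (hP : ∀ s, bisimD f r cR cT (f s) (fhat s) ≤ εP) (s t : S) :
    |bisimD f r cR cT s t - bisimD fhat r cR cT s t| ≤ 2 * cT * εP / (1 - cT) := by
  set d1 := bisimD f r cR cT with hd1
  set d2 := bisimD fhat r cR cT with hd2
  set A : Set ℝ := Set.range (fun p : S × S => |d1 p.1 p.2 - d2 p.1 p.2|) with hA
  have hAne : A.Nonempty := Set.range_nonempty _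
  have hB : ∀ x ∈ A, x ≤ 2 * (cR * ((M + M) / (1 - cT))) := by
    rintro x ⟨⟨a, b⟩, rfl⟩
    have h1 := bisim_le (f := f) hr hcR hcT0 hcT1 a b
    have h2 := bisim_le (f := fhat) hr hcR hcT0 hcT1 a b
    have h3 := bisim_nonneg (f := f) (r := r) hcR hcT0 a b
    have h4 := bisim_nonneg (f := fhat) (r := r) hcR hcT0 a b
    have := abs_sub (d1 a b) (d2 a b)
    rw [abs_of_nonneg h3, abs_of_nonneg h4] at this
    simp only [d1, d2] at *
    linarith
  have hbdd : BddAbove A := ⟨_, fun x hx => hB x hx⟩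
  set Δ := sSup A with hΔdef
  have hmem : ∀ a b : S, |d1 a b - d2 a b| ≤ Δ := fun a b =>
    le_csSup hbdd ⟨(a, b), rfl⟩
  have hstep : ∀ a b : S, |d1 a b - d2 a b| ≤ cT * (2 * εP + Δ) := by
    intro a b
    have e1 : d1 a b = cR * |r a - r b| + cT * d1 (f a) (f b) :=
      bisim_rec hr hcT0 hcT1 a b
    have e2 : d2 a b = cR * |r a - r b| + cT * d2 (fhat a) (fhat b) :=
      bisim_rec hr hcT0 hcT1 a b
    have key : |d1 (f a) (f b) - d2 (fhat a) (fhat b)| ≤ 2 * εP + Δ := by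
      have hq := bisim_quad (f := f) hr hcR hcT0 hcT1 (f a) (f b) (fhat a) (fhat b)
      have hm := hmem (fhat a) (fhat b)
      have hpa := hP a
      have hpb := hP b
      calc |d1 (f a) (f b) - d2 (fhat a) (fhat b)|
          ≤ |d1 (f a) (f b) - d1 (fhat a) (fhat b)|
            + |d1 (fhat a) (fhat b) - d2 (fhat a) (fhat b)| := abs_sub_le _ _ _
        _ ≤ 2 * εP + Δ := by simp only [d1, d2] at *; linarith
    have : d1 a b - d2 a b = cT * (d1 (f a) (f b) - d2 (fhat a) (fhat b)) := by
      rw [e1, e2]; ring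
    rw [this, abs_mul, abs_of_nonneg hcT0]
    exact mul_le_mul_of_nonneg_left key hcT0
  have hΔle : Δ ≤ cT * (2 * εP + Δ) := by
    refine csSup_le hAne ?_
    rintro x ⟨⟨a, b⟩, rfl⟩
    exact hstep a b
  have hΔbound : Δ ≤ 2 * cT * εP / (1 - cT) := by
    rw [le_div_iff₀ (by linarith)]
    nlinarith
  exact (hmem s t).trans hΔbound

/-- Bisimulation distance error with approximate dynamics: if
`|r̂ s − r s| ≤ ε_r` and `d(f s, f̂ s) ≤ ε_P` for all `s`, then for all `s, t`,
`|d(s,t) − d̂(s,t)| ≤ (2·c_R·ε_r)/(1 − c_T) + (2·c_T·ε_P)/(1 − c_T)`, where `d̂` is the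
bisimulation metric built from the approximate dynamics `f̂` and reward `r̂`. -/
theorem bisim_distance_model_error
    {S : Type*} [Nonempty S] (f : S → S) (r : S → ℝ)
    (hr : ∃ M, ∀ s, |r s| ≤ M)
    (cR cT : ℝ) (hcR : 0 ≤ cR) (hcT0 : 0 ≤ cT) (hcT1 : cT < 1)
    (fhat : S → S) (rhat : S → ℝ) (hrhat : ∃ M, ∀ s, |rhat s| ≤ M)
    (εr εP : ℝ) (hεr : 0 ≤ εr) (hεP : 0 ≤ εP)
    (hrerr : ∀ s, |rhat s - r s| ≤ εr)
    (hPerr : ∀ s, bisimD f r cR cT (f s) (fhat s) ≤ εP) :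
    ∀ s t : S, |bisimD f r cR cT s t - bisimD fhat rhat cR cT s t| ≤
      2 * cR * εr / (1 - cT) + 2 * cT * εP / (1 - cT) := by
  obtain ⟨M, hM⟩ := hr
  obtain ⟨M', hM'⟩ := hrhat
  intro s t
  have h1 := bisim_dyn_diff (fhat := fhat) hM hcR hcT0 hcT1 hεP hPerr s t
  have h2 := bisim_reward_diff (f := fhat) hM hM' hcR hcT0 hcT1 hrerr s t
  calc |bisimD f r cR cT s t - bisimD fhat rhat cR cT s t|
      ≤ |bisimD f r cR cT s t - bisimD fhat r cR cT s t|
        + |bisimD fhat r cR cT s t - bisimD fhat rhat cR cT s t| := abs_sub_le _ _ _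
    _ ≤ 2 * cR * εr / (1 - cT) + 2 * cT * εP / (1 - cT) := by linarith
end
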